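/- If M is a weight sequence and r ∈ ℕ, r ≥ 1, then the r-interpolating sequence P defined by P_{kr+j} = (M_k^{r−j} M_{k+1}^j)^{1/r} is also a weight sequence: P_0 = 1, P is logarithmically convex, and its quotients tend to infinity. -/

import Mathlib

open Filter Real

/-- The `r`-interpolating sequence of a weight sequence is again a weight
sequence. -/
theorem interpolating_is_weight_sequence (M P : ℕ → ℝ) (r : ℕ)
    (hr : 1 ≤ r) (hpos : ∀ p, 0 < M p) (hM0 : M 0 = 1)
    (hlc : ∀ p : ℕ, 1 ≤ p → (M p) ^ 2 ≤ M (p - 1) * M (p + 1))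
    (htend : Tendsto (fun p => M (p + 1) / M p) atTop atTop)
    (hP : ∀ k : ℕ, ∀ j : ℕ, j ≤ r →
      P (k * r + j) = (M k ^ ((r - j : ℕ) : ℝ) * M (k + 1) ^ (j : ℝ)) ^ ((1 : ℝ) / r)) :
    P 0 = 1 ∧ (∀ n, 0 < P n) ∧
      (∀ n : ℕ, 1 ≤ n → (P n) ^ 2 ≤ P (n - 1) * P (n + 1)) ∧
      Tendsto (fun n => P (n + 1) / P n) atTop atTop := by
  have hrpos : (0:ℝ) < (r:ℝ) := by
    exact_mod_cast Nat.lt_of_lt_of_le Nat.zero_lt_one hr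
  -- positivity of P
  have hPform : ∀ n : ℕ, P n =
      (M (n / r) ^ ((r - n % r : ℕ) : ℝ) * M (n / r + 1) ^ ((n % r : ℕ) : ℝ)) ^ ((1 : ℝ) / r) := by
    intro n
    have h := hP (n / r) (n % r) (Nat.mod_lt _ (by omega)).le
    rwa [Nat.div_add_mod'] at h
  have hPpos : ∀ n, 0 < P n := by
    intro n
    rw [hPform n]
    have := hpos (n / r)
    have := hpos (n / r + 1)
    positivity
  -- quotient formula
  have hQ : ∀ n : ℕ, P (n + 1) / P n = (M (n / r + 1) / M (n / r)) ^ ((1:ℝ)/r) := by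
    intro n
    set k := n / r with hk
    set j := n % r with hj
    have hjr : j < r := Nat.mod_lt _ (by omega)
    have h2 : P (n + 1) =
        (M k ^ ((r - (j+1) : ℕ):ℝ) * M (k+1) ^ ((j+1:ℕ):ℝ)) ^ ((1:ℝ)/r) := by
      have h := hP k (j+1) hjr
      rw [show k*r + (j+1) = n+1 by
        have h0 : k * r + j = n := Nat.div_add_mod' n r
        omega] at h
      exact h
    have ha : 0 < M k := hpos k
    have hb : 0 < M (k+1) := hpos (k+1)
    have hcast1 : ((r - (j+1) : ℕ):ℝ) = ((r - j : ℕ):ℝ) - 1 := by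
      rw [Nat.cast_sub (by omega), Nat.cast_sub hjr.le]
      push_cast
      ring
    rw [hPform n, h2, hcast1, ← Real.div_rpow (by positivity) (by positivity)]
    congr 1
    rw [Real.rpow_sub ha, Real.rpow_one]
    push_cast
    rw [Real.rpow_add hb]
    have h1 : M k ^ ((r - j : ℕ):ℝ) ≠ 0 := ne_of_gt (Real.rpow_pos_of_pos ha _)
    have h2' : M (k+1) ^ ((j:ℕ):ℝ) ≠ 0 := ne_of_gt (Real.rpow_pos_of_pos hb _)
    simp only [← hk, ← hj, Real.rpow_one]
    field_simp
  -- monotonicity of quotients of M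
  have hf : Monotone (fun p => M (p+1) / M p) := by
    apply monotone_nat_of_le_succ
    intro p
    have h := hlc (p+1) (by omega)
    simp only [Nat.add_sub_cancel] at h
    rw [div_le_div_iff₀ (hpos p) (hpos (p+1))]
    nlinarith [hpos p, hpos (p+1), hpos (p+2)]
  refine ⟨?_, hPpos, ?_, ?_⟩
  · -- P 0 = 1
    have h := hP 0 0 (by omega)
    simp only [Nat.mul_zero, Nat.zero_mul, Nat.add_zero, hM0] at h
    rw [h]
    norm_num
  · -- log-convexity
    intro n hn
    have h1 := hQ (n-1)
    have h2 := hQ n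
    rw [show n - 1 + 1 = n by omega] at h1
    have hkle : (n-1)/r ≤ n/r := Nat.div_le_div_right (by omega)
    have hmono : M ((n-1)/r + 1) / M ((n-1)/r) ≤ M (n/r + 1) / M (n/r) := hf hkle
    have hQle : P n / P (n-1) ≤ P (n+1) / P n := by
      rw [h1, h2]
      exact Real.rpow_le_rpow (le_of_lt (div_pos (hpos _) (hpos _))) hmono (by positivity)
    rw [div_le_div_iff₀ (hPpos _) (hPpos _)] at hQle
    nlinarith [hQle]
  · -- quotients tend to infinity
    have hdiv : Tendsto (fun n : ℕ => n / r) atTop atTop := by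
      apply Filter.tendsto_atTop_atTop.2
      intro b
      exact ⟨b * r, fun n hn => (Nat.le_div_iff_mul_le (by omega)).2 hn⟩
    have hcomp : Tendsto (fun n : ℕ => M (n / r + 1) / M (n / r)) atTop atTop :=
      htend.comp hdiv
    have hrp : Tendsto (fun x : ℝ => x ^ ((1:ℝ)/r)) atTop atTop :=
      tendsto_rpow_atTop (by positivity)
    have := hrp.comp hcomp
    apply Tendsto.congr _ this
    intro n
    exact (hQ n).symm
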